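/- If V : [t0,t1] → ℝ³ is C³ and satisfies V'''(t) = V''(t) × V(t) for all t ∈ [t0,t1], then the function t ↦ ‖V''(t)‖² is constant on [t0,t1]. (Lie quadratics have constant covariant acceleration.) -/

import Mathlib

noncomputable section
open scoped RealInnerProductSpace

/-- `ℝ³` with the Euclidean inner product. -/
abbrev E3 : Type := EuclideanSpace ℝ (Fin 3)

/-- The cross product on `ℝ³`; with `⁅u,v⁆ := cross u v`, `ℝ³` is the Lie algebra `so(3)`. -/
def cross (u v : E3) : E3 :=
  (WithLp.equiv 2 (Fin 3 → ℝ)).symm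
    ![u 1 * v 2 - u 2 * v 1, u 2 * v 0 - u 0 * v 2, u 0 * v 1 - u 1 * v 0]

lemma inner_cross_self (u v : E3) : ⟪cross u v, u⟫ = 0 := by
  simp [cross, PiLp.inner_apply, Fin.sum_univ_three]
  ring

lemma inner_self_cross (u v : E3) : ⟪u, cross u v⟫ = 0 := by
  rw [real_inner_comm]; exact inner_cross_self u v

/-- If a `C³` curve `V : [t0,t1] → ℝ³` satisfies `V''' = V'' × V`, then `t ↦ ‖V''(t)‖²`
is constant on `[t0,t1]`: Lie quadratics have constant covariant acceleration. -/
theorem stmt_1 (t0 t1 : ℝ) (ht : t0 < t1) (V : ℝ → E3)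
    (hV : ContDiffOn ℝ 3 V (Set.Icc t0 t1))
    (hLQ : ∀ t ∈ Set.Icc t0 t1,
        iteratedDerivWithin 3 V (Set.Icc t0 t1) t =
          cross (iteratedDerivWithin 2 V (Set.Icc t0 t1) t) (V t)) :
    ∀ s ∈ Set.Icc t0 t1, ∀ t ∈ Set.Icc t0 t1,
      ‖iteratedDerivWithin 2 V (Set.Icc t0 t1) s‖ ^ 2 =
        ‖iteratedDerivWithin 2 V (Set.Icc t0 t1) t‖ ^ 2 := by
  set S := Set.Icc t0 t1 with hS
  have hu : UniqueDiffOn ℝ S := uniqueDiffOn_Icc ht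
  set A := iteratedDerivWithin 2 V S with hA
  have hdiff : DifferentiableOn ℝ A S :=
    hV.differentiableOn_iteratedDerivWithin (by norm_num) hu
  have hA' : ∀ x ∈ S, HasDerivWithinAt A (iteratedDerivWithin 3 V S x) S x := by
    intro x hx
    have h1 := (hdiff x hx).hasDerivWithinAt
    rwa [← iteratedDerivWithin_succ] at h1
  set g : ℝ → ℝ := fun t => ⟪A t, A t⟫ with hg
  have hg' : ∀ x ∈ S, HasDerivWithinAt g 0 S x := by
    intro x hx
    have := (hA' x hx).inner ℝ (hA' x hx)
    rw [hLQ x hx, inner_cross_self, inner_self_cross, add_zero] at this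
    exact this
  have hconst : ∀ x ∈ S, g x = g t0 :=
    constant_of_derivWithin_zero (fun x hx => (hg' x hx).differentiableWithinAt)
      (fun x hx => (hg' x (Set.mem_Icc_of_Ico hx)).derivWithin (hu x (Set.mem_Icc_of_Ico hx)))
  intro s hs t htm
  have h1 : g s = g t := (hconst s hs).trans (hconst t htm).symm
  rw [← real_inner_self_eq_norm_sq, ← real_inner_self_eq_norm_sq]
  exact h1
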